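/- arXiv:1507.07443 — 3 statements merged into one kernel-verified Lean document; each statement's English description precedes it below -/
import Mathlib

section
/- Let M be a symmetric positive semidefinite p×p real matrix, θ⁰ ∈ ℝᵖ, K ≥ 0, and let I : ℝᵖ → ℝ satisfy I(θ) = ½ (θ − θ⁰)ᵀ M (θ − θ⁰) + o(‖θ − θ⁰‖²) as θ → θ⁰. Then lim_{δ → 0⁺} inf { 2 I(θ) (1/‖θ − θ⁰‖² + K) : 0 < ‖θ − θ⁰‖ ≤ δ } = λ_min(M), the smallest eigenvalue of M. -/
open Filter

section aux
variable {p : ℕ} {M : Matrix (Fin p) (Fin p) ℝ}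

lemma dot_eq_inner (M : Matrix (Fin p) (Fin p) ℝ) (v : EuclideanSpace ℝ (Fin p)) :
    dotProduct (fun i => v i) (M.mulVec fun i => v i)
      = (inner ℝ v (Matrix.toEuclideanLin M v) : ℝ) := by
  simp [PiLp.inner_apply, dotProduct, Matrix.toEuclideanLin_apply, Matrix.mulVec, mul_comm]

lemma toEuclideanLin_eigen (hH : M.IsHermitian) (j : Fin p) :
    Matrix.toEuclideanLin M (hH.eigenvectorBasis j) = hH.eigenvalues j • hH.eigenvectorBasis j := by
  apply PiLp.ext; intro i
  have := congrFun (hH.mulVec_eigenvectorBasis j) i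
  simpa [Matrix.toEuclideanLin_apply] using this

lemma quad_eq_sum (hH : M.IsHermitian) (v : EuclideanSpace ℝ (Fin p)) :
    (inner ℝ v (Matrix.toEuclideanLin M v) : ℝ)
      = ∑ i, hH.eigenvalues i * (inner ℝ (hH.eigenvectorBasis i) v : ℝ)^2 := by
  have hT : (Matrix.toEuclideanLin M).IsSymmetric := Matrix.isHermitian_iff_isSymmetric.1 hH
  rw [← OrthonormalBasis.sum_inner_mul_inner hH.eigenvectorBasis]
  refine Finset.sum_congr rfl fun i _ => ?_
  rw [← hT (hH.eigenvectorBasis i) v, toEuclideanLin_eigen hH i, real_inner_smul_left,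
    real_inner_comm v (hH.eigenvectorBasis i)]
  ring

lemma norm_sq_eq_sum (hH : M.IsHermitian) (v : EuclideanSpace ℝ (Fin p)) :
    ‖v‖^2 = ∑ i, (inner ℝ (hH.eigenvectorBasis i) v : ℝ)^2 := by
  rw [← real_inner_self_eq_norm_sq, ← OrthonormalBasis.sum_inner_mul_inner hH.eigenvectorBasis]
  refine Finset.sum_congr rfl fun i _ => ?_
  rw [real_inner_comm v (hH.eigenvectorBasis i)]; ring

lemma rayleigh_lower (hH : M.IsHermitian) (v : EuclideanSpace ℝ (Fin p)) :
    (⨅ i, hH.eigenvalues i) * ‖v‖^2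
      ≤ dotProduct (fun i => v i) (M.mulVec fun i => v i) := by
  rw [dot_eq_inner, quad_eq_sum hH, norm_sq_eq_sum hH, Finset.mul_sum]
  refine Finset.sum_le_sum fun i _ => ?_
  exact mul_le_mul_of_nonneg_right (ciInf_le (Set.Finite.bddBelow (Set.finite_range _)) i)
    (sq_nonneg _)

lemma quad_smul_eigen (hH : M.IsHermitian) (j : Fin p) (t : ℝ) :
    dotProduct (fun i => (t • hH.eigenvectorBasis j) i)
        (M.mulVec fun i => (t • hH.eigenvectorBasis j) i)
      = hH.eigenvalues j * t^2 := by
  rw [dot_eq_inner, map_smul, inner_smul_left, inner_smul_right, toEuclideanLin_eigen hH j,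
    inner_smul_right, real_inner_self_eq_norm_sq, hH.eigenvectorBasis.orthonormal.1 j]
  simp; ring
end aux

set_option maxHeartbeats 1000000 in
/-- **Theorem 1, extended E-optimality case.** If `I` has quadratic expansion
`I(θ) = ½ (θ−θ0)ᵀ M (θ−θ0) + o(‖θ−θ0‖²)` with `M` symmetric positive semidefinite,
and `K ≥ 0`, then `inf { 2 I(θ) (1/‖θ−θ0‖² + K) : 0 < ‖θ−θ0‖ ≤ δ }` tends, as
`δ → 0⁺`, to the smallest eigenvalue of `M`. -/
theorem extended_E_optimality_limit
    {p : ℕ} (hp : 0 < p) (M : Matrix (Fin p) (Fin p) ℝ)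
    (hMsymm : M.IsSymm) (hM : M.PosSemidef)
    (θ0 : EuclideanSpace ℝ (Fin p)) (K : ℝ) (hK : 0 ≤ K)
    (I : EuclideanSpace ℝ (Fin p) → ℝ)
    (hI : (fun θ => I θ - (1 / 2) * dotProduct (fun i => (θ - θ0) i)
        (M.mulVec (fun i => (θ - θ0) i)))
      =o[nhds θ0] fun θ => ‖θ - θ0‖ ^ 2) :
    Tendsto
      (fun δ : ℝ => sInf {v : ℝ | ∃ θ : EuclideanSpace ℝ (Fin p),
        0 < ‖θ - θ0‖ ∧ ‖θ - θ0‖ ≤ δ ∧ v = 2 * I θ * (1 / ‖θ - θ0‖ ^ 2 + K)})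
      (nhdsWithin 0 (Set.Ioi 0))
      (nhds (⨅ i : Fin p, hM.1.eigenvalues i)) := by
  classical
  have hnep : Nonempty (Fin p) := ⟨⟨0, hp⟩⟩
  obtain ⟨i0, hi0⟩ := exists_eq_ciInf_of_finite (f := hM.1.eigenvalues)
  set lam := ⨅ i : Fin p, hM.1.eigenvalues i with hlamdef
  set u := hM.1.eigenvectorBasis i0 with hudef
  have hu_norm : ‖u‖ = 1 := hM.1.eigenvectorBasis.orthonormal.1 i0
  rw [Metric.tendsto_nhdsWithin_nhds]
  intro ε hε
  have h8 : (0:ℝ) < ε/8 := by linarith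
  have hball := hI.def h8
  rw [Metric.eventually_nhds_iff] at hball
  obtain ⟨r, hr, hball⟩ := hball
  set A : ℝ := (|lam| + ε) * K + 1 with hAdef
  have hA : 0 < A := by positivity
  have hAK : (|lam| + ε) * K ≤ A := by rw [hAdef]; linarith
  set d2 : ℝ := Real.sqrt (ε / (2*A)) with hd2def
  have hd2 : 0 < d2 := Real.sqrt_pos.2 (by positivity)
  have hd2sq : d2 ^ 2 = ε / (2*A) := Real.sq_sqrt (by positivity)
  clear_value A d2
  refine ⟨min r d2, lt_min hr hd2, ?_⟩
  intro δ hδ hdist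
  have hδpos : 0 < δ := hδ
  have hδlt : δ < min r d2 := by
    rwa [Real.dist_eq, sub_zero, abs_of_pos hδpos] at hdist
  have hδr : δ < r := lt_of_lt_of_le hδlt (min_le_left _ _)
  have hδd2 : δ ≤ d2 := le_of_lt (lt_of_lt_of_le hδlt (min_le_right _ _))
  -- key bound on the K-term
  have hKt : ∀ t : ℝ, 0 ≤ t → t ≤ δ → (|lam| + ε) * (K * t^2) ≤ ε/2 := by
    intro t ht0 htδ
    have ht2 : t^2 ≤ ε / (2*A) := by
      rw [← hd2sq]
      exact pow_le_pow_left₀ ht0 (le_trans htδ hδd2) 2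
    have h1 : (|lam| + ε) * (K * t^2) ≤ A * t^2 := by
      calc (|lam| + ε) * (K * t^2) = ((|lam| + ε) * K) * t^2 := by ring
        _ ≤ A * t^2 := mul_le_mul_of_nonneg_right hAK (sq_nonneg t)
    have h2 : A * t^2 ≤ A * (ε / (2*A)) := mul_le_mul_of_nonneg_left ht2 (le_of_lt hA)
    have h3 : A * (ε / (2*A)) = ε/2 := by field_simp
    exact le_trans h1 (h3 ▸ h2)
  -- lower bound
  have hlow : ∀ v ∈ {v : ℝ | ∃ θ : EuclideanSpace ℝ (Fin p),
      0 < ‖θ - θ0‖ ∧ ‖θ - θ0‖ ≤ δ ∧ v = 2 * I θ * (1 / ‖θ - θ0‖ ^ 2 + K)},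
      lam - ε * (3/4) ≤ v := by
    rintro v ⟨θ, ht0, htδ, rfl⟩
    set t := ‖θ - θ0‖ with htdef
    have htr : dist θ θ0 < r := by
      rw [dist_eq_norm]; exact lt_of_le_of_lt htδ hδr
    have hb := hball htr
    rw [Real.norm_eq_abs, Real.norm_eq_abs, abs_of_nonneg (sq_nonneg t)] at hb
    have habs := abs_le.1 hb
    have hQ : lam * t^2 ≤ dotProduct (fun i => (θ - θ0) i)
        (M.mulVec fun i => (θ - θ0) i) := by
      rw [hlamdef]; exact rayleigh_lower hM.1 (θ - θ0)
    have h2I : (lam - ε/4) * t^2 ≤ 2 * I θ := by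
      linarith only [habs.1, hQ]
    have hpos : (0:ℝ) < 1/t^2 + K := by positivity
    have step1 : (lam - ε/4) * t^2 * (1/t^2 + K) ≤ 2 * I θ * (1/t^2 + K) :=
      mul_le_mul_of_nonneg_right h2I (le_of_lt hpos)
    have ht2 : t^2 * (1/t^2 + K) = 1 + K * t^2 := by field_simp
    rw [mul_assoc, ht2] at step1
    have hKt2 : 0 ≤ K * t^2 := by positivity
    have hcross : -((|lam| + ε) * (K * t^2)) ≤ (lam - ε/4) * (K * t^2) := by
      have h1 : -(|lam| + ε) ≤ lam - ε/4 := by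
        have := neg_abs_le lam; linarith
      have := mul_le_mul_of_nonneg_right h1 hKt2
      linarith
    have hKb := hKt t (norm_nonneg _) htδ
    have hexp : (lam - ε/4) * (1 + K * t^2) = (lam - ε/4) + (lam - ε/4) * (K * t^2) := by ring
    linarith only [step1, hcross, hKb, hexp]
  -- the witness point
  have hθsub : (θ0 + δ • u) - θ0 = δ • u := add_sub_cancel_left θ0 (δ • u)
  have hθnorm : ‖(θ0 + δ • u) - θ0‖ = δ := by
    rw [hθsub, norm_smul, hu_norm, Real.norm_eq_abs, abs_of_pos hδpos, mul_one]
  have hQs : dotProduct (fun i => ((θ0 + δ • u) - θ0) i)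
      (M.mulVec fun i => ((θ0 + δ • u) - θ0) i) = lam * δ^2 := by
    rw [hθsub, hudef, quad_smul_eigen hM.1 i0 δ, hi0, hlamdef]
  have hmem : (2 * I (θ0 + δ • u) * (1 / δ ^ 2 + K)) ∈ {v : ℝ |
      ∃ θ : EuclideanSpace ℝ (Fin p),
      0 < ‖θ - θ0‖ ∧ ‖θ - θ0‖ ≤ δ ∧ v = 2 * I θ * (1 / ‖θ - θ0‖ ^ 2 + K)} :=
    ⟨θ0 + δ • u, by rw [hθnorm]; exact hδpos, by rw [hθnorm], by rw [hθnorm]⟩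
  have hbs := hball (show dist (θ0 + δ • u) θ0 < r by
    rw [dist_eq_norm, hθnorm]; exact hδr)
  rw [Real.norm_eq_abs, Real.norm_eq_abs, hθnorm, abs_of_nonneg (sq_nonneg δ), hQs] at hbs
  have habs2 := abs_le.1 hbs
  have hup : 2 * I (θ0 + δ • u) * (1 / δ ^ 2 + K) ≤ lam + ε * (3/4) := by
    have h2I : 2 * I (θ0 + δ • u) ≤ (lam + ε/4) * δ^2 := by
      linarith only [habs2.2]
    have hpos : (0:ℝ) < 1/δ^2 + K := by positivity
    have step1 : 2 * I (θ0 + δ • u) * (1/δ^2 + K) ≤ (lam + ε/4) * δ^2 * (1/δ^2 + K) :=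
      mul_le_mul_of_nonneg_right h2I (le_of_lt hpos)
    have hδ2 : δ^2 * (1/δ^2 + K) = 1 + K * δ^2 := by field_simp
    rw [mul_assoc (lam + ε/4), hδ2] at step1
    have hKδ2 : 0 ≤ K * δ^2 := by positivity
    have hcross : (lam + ε/4) * (K * δ^2) ≤ (|lam| + ε) * (K * δ^2) := by
      have h1 : lam + ε/4 ≤ |lam| + ε := by
        have := le_abs_self lam; linarith
      exact mul_le_mul_of_nonneg_right h1 hKδ2
    have hKb := hKt δ (le_of_lt hδpos) le_rfl
    have hexp : (lam + ε/4) * (1 + K * δ^2) = (lam + ε/4) + (lam + ε/4) * (K * δ^2) := by ring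
    linarith only [step1, hcross, hKb, hexp]
  have hbdd : BddBelow {v : ℝ | ∃ θ : EuclideanSpace ℝ (Fin p),
      0 < ‖θ - θ0‖ ∧ ‖θ - θ0‖ ≤ δ ∧ v = 2 * I θ * (1 / ‖θ - θ0‖ ^ 2 + K)} :=
    ⟨lam - ε * (3/4), fun v hv => hlow v hv⟩
  have h1 := csInf_le hbdd hmem
  have h2 := le_csInf ⟨_, hmem⟩ hlow
  rw [Real.dist_eq, abs_lt]
  exact ⟨by linarith only [h2, hε], by linarith only [h1, hup, hε]⟩
end

section
/- Let M be a symmetric positive definite p×p real matrix, θ⁰ ∈ ℝᵖ, K ≥ 0, let I : ℝᵖ → ℝ satisfy I(θ) = ½ (θ − θ⁰)ᵀ M (θ − θ⁰) + o(‖θ − θ⁰‖²) as θ → θ⁰, and let h : ℝᵖ → ℝ be differentiable at θ⁰ with gradient c ≠ 0, so that h(θ) − h(θ⁰) = cᵀ(θ − θ⁰) + o(‖θ − θ⁰‖). Then lim_{δ → 0⁺} inf { 2 I(θ) (1/(h(θ⁰) − h(θ))² + K) : 0 < ‖θ − θ⁰‖ ≤ δ, h(θ) ≠ h(θ⁰)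 } = (cᵀ M⁻¹ c)⁻¹. -/
open Filter
open Matrix

set_option maxHeartbeats 1000000

lemma aux_symm_dot {p : ℕ} (M : Matrix (Fin p) (Fin p) ℝ) (hMsymm : M.IsSymm)
    (v u : Fin p → ℝ) : v ⬝ᵥ M.mulVec u = u ⬝ᵥ M.mulVec v := by
  rw [Matrix.dotProduct_mulVec, ← Matrix.mulVec_transpose, hMsymm.eq, dotProduct_comm]

lemma aux_pos {p : ℕ} {M : Matrix (Fin p) (Fin p) ℝ} (hM : M.PosDef)
    {u : Fin p → ℝ} (hu : u ≠ 0) : 0 < u ⬝ᵥ M.mulVec u := by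
  simpa using hM.dotProduct_mulVec_pos hu

lemma aux_nonneg {p : ℕ} {M : Matrix (Fin p) (Fin p) ℝ} (hM : M.PosDef)
    (u : Fin p → ℝ) : 0 ≤ u ⬝ᵥ M.mulVec u := by
  simpa using hM.posSemidef.dotProduct_mulVec_nonneg u

lemma aux_mulVec_inv {p : ℕ} {M : Matrix (Fin p) (Fin p) ℝ} (hM : M.PosDef)
    (c : Fin p → ℝ) : M.mulVec (M⁻¹.mulVec c) = c := by
  rw [Matrix.mulVec_mulVec, Matrix.mul_nonsing_inv _ (isUnit_iff_ne_zero.mpr hM.det_pos.ne'),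
    Matrix.one_mulVec]

lemma aux_CS_bilin {p : ℕ} {M : Matrix (Fin p) (Fin p) ℝ} (hMsymm : M.IsSymm) (hM : M.PosDef)
    (w u : Fin p → ℝ) :
    (w ⬝ᵥ M.mulVec u) ^ 2 ≤ (w ⬝ᵥ M.mulVec w) * (u ⬝ᵥ M.mulVec u) := by
  have key : ∀ t : ℝ, 0 ≤ (w ⬝ᵥ M.mulVec w) * (t * t) + (2 * (w ⬝ᵥ M.mulVec u)) * t
      + (u ⬝ᵥ M.mulVec u) := by
    intro t
    have h0 : 0 ≤ (u + t • w) ⬝ᵥ M.mulVec (u + t • w) := aux_nonneg hM _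
    have hsym := aux_symm_dot M hMsymm w u
    simp only [Matrix.mulVec_add, Matrix.mulVec_smul, add_dotProduct,
      dotProduct_add, smul_dotProduct, dotProduct_smul,
      smul_eq_mul] at h0
    refine le_trans h0 (le_of_eq ?_)
    rw [hsym]; ring
  have hd := discrim_le_zero key
  rw [discrim] at hd
  linarith [hd]

lemma aux_lam {p : ℕ} (hp : 0 < p) {M : Matrix (Fin p) (Fin p) ℝ} (hM : M.PosDef) :
    ∃ lam : ℝ, 0 < lam ∧ ∀ u : EuclideanSpace ℝ (Fin p),
      lam * ‖u‖ ^ 2 ≤ (fun i => u i) ⬝ᵥ M.mulVec (fun i => u i) := by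
  have hQc : Continuous fun u : EuclideanSpace ℝ (Fin p) =>
      (fun i => u i) ⬝ᵥ M.mulVec (fun i => u i) := by
    simp only [dotProduct, Matrix.mulVec]
    exact continuous_finset_sum _ fun i _ =>
      ((EuclideanSpace.proj i).continuous).mul
        (continuous_finset_sum _ fun j _ =>
          continuous_const.mul (EuclideanSpace.proj j).continuous)
  have hsne : (Metric.sphere (0 : EuclideanSpace ℝ (Fin p)) 1).Nonempty := by
    refine ⟨EuclideanSpace.single ⟨0, hp⟩ 1, ?_⟩
    simp [EuclideanSpace.norm_single]
  obtain ⟨z, hzS, hzmin⟩ := (isCompact_sphere (0 : EuclideanSpace ℝ (Fin p)) 1).exists_isMinOn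
    hsne hQc.continuousOn
  have hz1 : ‖z‖ = 1 := by simpa using hzS
  have hzne : z ≠ 0 := by intro hz0; rw [hz0] at hz1; simp at hz1
  have hzne' : (fun i => z i) ≠ (0 : Fin p → ℝ) := by
    intro hz0; exact hzne (by ext i; simpa using congrFun hz0 i)
  refine ⟨_, aux_pos hM hzne', fun u => ?_⟩
  rcases eq_or_ne u 0 with rfl | hu
  · simp
  · set v : EuclideanSpace ℝ (Fin p) := ‖u‖⁻¹ • u with hv
    have hun : (0:ℝ) < ‖u‖ := norm_pos_iff.mpr hu
    have hvS : v ∈ Metric.sphere (0 : EuclideanSpace ℝ (Fin p)) 1 := by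
      simp [hv, norm_smul, abs_of_pos (inv_pos.mpr hun), inv_mul_cancel₀ hun.ne']
    have hmin : (fun i => z i) ⬝ᵥ M.mulVec (fun i => z i)
        ≤ (fun i => v i) ⬝ᵥ M.mulVec (fun i => v i) := hzmin hvS
    have hscale : (fun i => v i) ⬝ᵥ M.mulVec (fun i => v i)
        = ‖u‖⁻¹ * ‖u‖⁻¹ * ((fun i => u i) ⬝ᵥ M.mulVec (fun i => u i)) := by
      have : (fun i => v i) = ‖u‖⁻¹ • (fun i => u i) := by
        funext i; simp [hv]
      rw [this, smul_dotProduct, Matrix.mulVec_smul, dotProduct_smul,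
        smul_eq_mul, smul_eq_mul]
      ring
    rw [hscale] at hmin
    have h2 : (fun i => z i) ⬝ᵥ M.mulVec (fun i => z i) * ‖u‖^2
        ≤ (fun i => u i) ⬝ᵥ M.mulVec (fun i => u i) := by
      have := mul_le_mul_of_nonneg_right hmin (by positivity : (0:ℝ) ≤ ‖u‖^2)
      calc _ ≤ ‖u‖⁻¹ * ‖u‖⁻¹ * ((fun i => u i) ⬝ᵥ M.mulVec (fun i => u i)) * ‖u‖^2 := this
        _ = _ := by rw [pow_two]; field_simp
    linarith [h2]

/-- **Theorem 1, extended c-optimality case (nonsingular).** If `I` has quadratic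
expansion `I(θ) = ½ (θ−θ0)ᵀ M (θ−θ0) + o(‖θ−θ0‖²)` with `M` symmetric positive
definite, `K ≥ 0`, and `h` is differentiable at `θ0` with nonzero gradient `c`, then
`inf { 2 I(θ) (1/(h(θ0)−h(θ))² + K) : 0 < ‖θ−θ0‖ ≤ δ, h(θ) ≠ h(θ0) }` tends, as
`δ → 0⁺`, to `(cᵀ M⁻¹ c)⁻¹`. -/
theorem extended_c_optimality_limit
    {p : ℕ} (M : Matrix (Fin p) (Fin p) ℝ)
    (hMsymm : M.IsSymm) (hM : M.PosDef)
    (θ0 : EuclideanSpace ℝ (Fin p)) (K : ℝ) (hK : 0 ≤ K)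
    (I : EuclideanSpace ℝ (Fin p) → ℝ)
    (hI : (fun θ => I θ - (1 / 2) * dotProduct (fun i => (θ - θ0) i)
        (M.mulVec (fun i => (θ - θ0) i)))
      =o[nhds θ0] fun θ => ‖θ - θ0‖ ^ 2)
    (h : EuclideanSpace ℝ (Fin p) → ℝ) (c : EuclideanSpace ℝ (Fin p))
    (hc : HasGradientAt h c θ0) (hc0 : c ≠ 0) :
    Tendsto
      (fun δ : ℝ => sInf {v : ℝ | ∃ θ : EuclideanSpace ℝ (Fin p),
        0 < ‖θ - θ0‖ ∧ ‖θ - θ0‖ ≤ δ ∧ h θ ≠ h θ0 ∧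
        v = 2 * I θ * (1 / (h θ0 - h θ) ^ 2 + K)})
      (nhdsWithin 0 (Set.Ioi 0))
      (nhds (dotProduct (fun i => c i) (M⁻¹.mulVec (fun i => c i)))⁻¹) := by
  classical
  have hp : 0 < p := by
    rcases Nat.eq_zero_or_pos p with h0 | h0
    · subst h0
      exact absurd (by ext i; exact i.elim0 : c = 0) hc0
    · exact h0
  set c' : Fin p → ℝ := fun i => c i with hc'def
  set w : Fin p → ℝ := M⁻¹.mulVec c' with hwdef
  set B : ℝ := dotProduct c' w with hBdef
  have hc0' : c' ≠ 0 := fun h0 => hc0 (by ext i; simpa using congrFun h0 i)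
  have hB : 0 < B := aux_pos (hM.inv) hc0'
  have hMw : M.mulVec w = c' := aux_mulVec_inv hM c'
  have hQw : w ⬝ᵥ M.mulVec w = B := by rw [hMw, dotProduct_comm]
  have hCS : ∀ u : Fin p → ℝ, (c' ⬝ᵥ u)^2 ≤ B * (u ⬝ᵥ M.mulVec u) := by
    intro u
    have h1 := aux_CS_bilin hMsymm hM w u
    have h2 : w ⬝ᵥ M.mulVec u = c' ⬝ᵥ u := by
      rw [aux_symm_dot M hMsymm, hMw, dotProduct_comm]
    rw [h2, hQw] at h1
    exact h1
  obtain ⟨lam, hlam, hlamb⟩ := aux_lam hp hM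
  -- the witness direction
  set w' : EuclideanSpace ℝ (Fin p) := (WithLp.equiv 2 (Fin p → ℝ)).symm w with hw'def
  set W : ℝ := ‖w'‖ with hWdef
  have hw'ne : w' ≠ 0 := by
    intro h0
    have hw0 : w = 0 := by
      funext i
      have := congrFun (congrArg (WithLp.equiv 2 (Fin p → ℝ)) h0) i
      simpa [hw'def] using this
    rw [hBdef, hw0] at hB
    simp at hB
  have hW : 0 < W := norm_pos_iff.mpr hw'ne
  -- gradient little-o in dotProduct form
  have hinner : ∀ θ : EuclideanSpace ℝ (Fin p),
      (inner ℝ c (θ - θ0) : ℝ) = c' ⬝ᵥ (fun i => (θ - θ0) i) := by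
    intro θ
    simp [PiLp.inner_apply, RCLike.inner_apply', dotProduct, hc'def, mul_comm]
  have hGo : (fun θ => h θ - h θ0 - c' ⬝ᵥ (fun i => (θ - θ0) i))
      =o[nhds θ0] fun θ => θ - θ0 := by
    have := hasGradientAt_iff_isLittleO.mp hc
    refine this.congr' ?_ (Eventually.of_forall fun _ => rfl)
    refine Eventually.of_forall fun θ => ?_
    show h θ - h θ0 - (inner ℝ c (θ - θ0) : ℝ) = h θ - h θ0 - c' ⬝ᵥ fun i => (θ - θ0) i
    rw [hinner θ]
  rw [Metric.tendsto_nhdsWithin_nhds]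
  intro ε hε
  -- the comparison functions
  set A : ℝ → ℝ := fun t => (1 - 2*t/lam) / ((1+t)*B + (t+t^2)/lam) with hAdef
  set U : ℝ → ℝ := fun t => (B + 2*t*W^2)/(B - t*W)^2 with hUdef
  have hA0 : A 0 = B⁻¹ := by simp [hAdef]
  have hU0 : U 0 = B⁻¹ := by
    simp only [hUdef, mul_zero, zero_mul, add_zero, sub_zero, mul_comm]
    rw [pow_two]
    field_simp
  have hAc : ContinuousAt A 0 := by
    apply ContinuousAt.div
    · fun_prop
    · fun_prop
    · simp [hB.ne']
  have hUc : ContinuousAt U 0 := by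
    apply ContinuousAt.div
    · fun_prop
    · fun_prop
    · simp [pow_two, hB.ne']
  have hAe : ∀ᶠ t in nhds (0:ℝ), |A t - B⁻¹| < ε/2 := by
    have h1 := Metric.tendsto_nhds.mp (hA0 ▸ hAc.tendsto) (ε/2) (by positivity)
    filter_upwards [h1] with t ht using by rwa [Real.dist_eq] at ht
  have hUe : ∀ᶠ t in nhds (0:ℝ), |U t - B⁻¹| < ε/2 := by
    have h1 := Metric.tendsto_nhds.mp (hU0 ▸ hUc.tendsto) (ε/2) (by positivity)
    filter_upwards [h1] with t ht using by rwa [Real.dist_eq] at ht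
  obtain ⟨a, ha, haimp⟩ := Metric.eventually_nhds_iff.mp (hAe.and hUe)
  set tmax : ℝ := min (lam/2) (B/(2*(W+1))) with htmaxdef
  have htmax : 0 < tmax := lt_min (by positivity) (by positivity)
  set t : ℝ := min a tmax / 2 with htdef
  have ht0 : 0 < t := by positivity
  have hta : t < a := by
    rw [htdef]; have h1 := min_le_left a tmax; linarith
  have httmax : t ≤ tmax/2 := by
    rw [htdef]; have h1 := min_le_right a tmax; linarith
  have htlam : 2*t ≤ lam := by
    have h1 : tmax ≤ lam/2 := min_le_left _ _
    linarith
  have htW : t*W < B := by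
    have h1 : tmax ≤ B/(2*(W+1)) := min_le_right _ _
    have h2 : t ≤ B/(2*(W+1)) := by linarith [httmax, htmax]
    have h3 : t*(W+1) ≤ (B/(2*(W+1)))*(W+1) := mul_le_mul_of_nonneg_right h2 (by positivity)
    have h4 : (B/(2*(W+1)))*(W+1) = B/2 := by field_simp
    linarith [h3, h4, ht0, hB]
  obtain ⟨hAt, hUt⟩ := haimp (by rw [Real.dist_eq, sub_zero, abs_of_pos ht0]; exact hta)
  -- quantitative bounds from the little-o hypotheses
  obtain ⟨r1, hr1, hIb⟩ := Metric.eventually_nhds_iff.mp (hI.def ht0)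
  obtain ⟨r2, hr2, hGb⟩ := Metric.eventually_nhds_iff.mp (hGo.def ht0)
  set δ0 : ℝ := min r1 r2 with hδ0def
  refine ⟨δ0, lt_min hr1 hr2, ?_⟩
  intro δ hδmem hδd
  have hδ : 0 < δ := hδmem
  have hδlt : δ < δ0 := by rwa [Real.dist_eq, sub_zero, abs_of_pos hδ] at hδd
  set S : Set ℝ := {v : ℝ | ∃ θ : EuclideanSpace ℝ (Fin p),
      0 < ‖θ - θ0‖ ∧ ‖θ - θ0‖ ≤ δ ∧ h θ ≠ h θ0 ∧
      v = 2 * I θ * (1 / (h θ0 - h θ) ^ 2 + K)} with hSdef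
  -- pointwise quantitative bounds
  have hIbound : ∀ θ : EuclideanSpace ℝ (Fin p), ‖θ - θ0‖ < δ0 →
      |I θ - 1/2 * ((fun i => (θ - θ0) i) ⬝ᵥ M.mulVec (fun i => (θ - θ0) i))|
        ≤ t * ‖θ - θ0‖^2 := by
    intro θ hθ
    have h1 := hIb (show dist θ θ0 < r1 by
      rw [dist_eq_norm]; exact lt_of_lt_of_le hθ (min_le_left _ _))
    simpa [abs_of_nonneg (sq_nonneg ‖θ - θ0‖)] using h1
  have hGbound : ∀ θ : EuclideanSpace ℝ (Fin p), ‖θ - θ0‖ < δ0 →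
      |h θ - h θ0 - c' ⬝ᵥ (fun i => (θ - θ0) i)| ≤ t * ‖θ - θ0‖ := by
    intro θ hθ
    have h1 := hGb (show dist θ θ0 < r2 by
      rw [dist_eq_norm]; exact lt_of_lt_of_le hθ (min_le_right _ _))
    simpa using h1
  -- lower bound for all elements of S
  set D : ℝ := (1+t)*B + (t+t^2)/lam with hDdef
  have hD : 0 < D := by
    have : 0 < (1+t)*B := by positivity
    have : 0 < (t+t^2)/lam := by positivity
    rw [hDdef]; linarith
  have hlow : ∀ v ∈ S, A t ≤ v := by
    rintro v ⟨θ, hθ0n, hθδ, hne, rfl⟩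
    have hθδ0 : ‖θ - θ0‖ < δ0 := lt_of_le_of_lt hθδ hδlt
    have hI1 := hIbound θ hθδ0
    have hG1 := hGbound θ hθδ0
    set q : ℝ := (fun i => (θ - θ0) i) ⬝ᵥ M.mulVec (fun i => (θ - θ0) i) with hqdef
    have hune : (fun i => (θ - θ0) i) ≠ (0 : Fin p → ℝ) := by
      intro h0
      have : θ - θ0 = 0 := by ext i; simpa using congrFun h0 i
      rw [this] at hθ0n
      simp at hθ0n
    have hqpos : 0 < q := aux_pos hM hune
    have hn2 : ‖θ - θ0‖^2 ≤ q / lam := by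
      rw [le_div_iff₀ hlam]
      have := hlamb (θ - θ0)
      linarith [this]
    have h2I : (1 - 2*t/lam) * q ≤ 2 * I θ := by
      have h1 := (abs_le.mp hI1).1
      have h2 : 2*t*‖θ - θ0‖^2 ≤ 2*t*(q/lam) :=
        mul_le_mul_of_nonneg_left hn2 (by positivity)
      have h3 : 2*t*(q/lam) = 2*t/lam*q := by ring
      linarith [h1, h2, h3]
    have h2Ipos : 0 ≤ 2 * I θ := by
      refine le_trans ?_ h2I
      have h1 : 2*t/lam ≤ 1 := by
        rw [div_le_one hlam]; linarith
      exact mul_nonneg (by linarith) hqpos.le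
    have hd : h θ0 - h θ ≠ 0 := sub_ne_zero.mpr (Ne.symm hne)
    have hd2 : 0 < (h θ0 - h θ)^2 := by positivity
    have habs : |h θ - h θ0| ≤ |c' ⬝ᵥ (fun i => (θ - θ0) i)| + t*‖θ - θ0‖ := by
      have h1 : h θ - h θ0 = (h θ - h θ0 - c' ⬝ᵥ (fun i => (θ - θ0) i))
          + c' ⬝ᵥ (fun i => (θ - θ0) i) := by ring
      rw [h1]
      refine le_trans (abs_add_le _ _) ?_
      linarith [hG1]
    have hd2ub : (h θ0 - h θ)^2 ≤ D * q := by
      have e1 : (h θ0 - h θ)^2 = (h θ - h θ0)^2 := by ring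
      have e2 : (h θ - h θ0)^2 ≤ (|c' ⬝ᵥ (fun i => (θ - θ0) i)| + t*‖θ - θ0‖)^2 := by
        rw [← sq_abs (h θ - h θ0)]
        exact pow_le_pow_left₀ (abs_nonneg _) habs 2
      have e3 : (|c' ⬝ᵥ (fun i => (θ - θ0) i)| + t*‖θ - θ0‖)^2
          ≤ (1+t)*(c' ⬝ᵥ (fun i => (θ - θ0) i))^2 + (t+t^2)*‖θ - θ0‖^2 := by
        have hs := sq_nonneg (|c' ⬝ᵥ (fun i => (θ - θ0) i)| - ‖θ - θ0‖)
        have key : (1+t)*(c' ⬝ᵥ (fun i => (θ - θ0) i))^2 + (t+t^2)*‖θ - θ0‖^2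
            - (|c' ⬝ᵥ (fun i => (θ - θ0) i)| + t*‖θ - θ0‖)^2
            = t*((|c' ⬝ᵥ (fun i => (θ - θ0) i)| - ‖θ - θ0‖)^2) := by
          rw [← sq_abs (c' ⬝ᵥ (fun i => (θ - θ0) i))]; ring
        have hmul := mul_nonneg ht0.le hs
        linarith [key, hmul]
      have e4 : (c' ⬝ᵥ (fun i => (θ - θ0) i))^2 ≤ B * q := hCS _
      have e5 := hn2
      have e6 : (1+t)*(c' ⬝ᵥ (fun i => (θ - θ0) i))^2 ≤ (1+t)*(B*q) :=
        mul_le_mul_of_nonneg_left e4 (by linarith [ht0.le])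
      have e7 : (t+t^2)*‖θ - θ0‖^2 ≤ (t+t^2)*(q/lam) :=
        mul_le_mul_of_nonneg_left e5 (by positivity)
      have e8 : (1+t)*(B*q) + (t+t^2)*(q/lam) = D*q := by
        rw [hDdef]; ring
      calc (h θ0 - h θ)^2 = (h θ - h θ0)^2 := e1
        _ ≤ _ := e2
        _ ≤ _ := e3
        _ ≤ (1+t)*(B*q) + (t+t^2)*(q/lam) := by linarith
        _ = D*q := e8
    have hfrac : A t ≤ 2*I θ / (h θ0 - h θ)^2 := by
      have h1 : A t = (1 - 2*t/lam)*q / (D*q) := by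
        rw [mul_div_mul_right _ _ hqpos.ne']
      rw [h1]
      exact div_le_div₀ h2Ipos h2I hd2 hd2ub
    have h2 : 2*I θ / (h θ0 - h θ)^2 ≤ 2 * I θ * (1/(h θ0 - h θ)^2 + K) := by
      have h3 := mul_le_mul_of_nonneg_left
        (le_add_of_nonneg_right hK : 1/(h θ0 - h θ)^2 ≤ 1/(h θ0 - h θ)^2 + K) h2Ipos
      calc 2*I θ / (h θ0 - h θ)^2 = 2*I θ * (1/(h θ0 - h θ)^2) := by ring
        _ ≤ _ := h3
    linarith [hfrac, h2]
  -- upper bound witness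
  set C : ℝ := (B + 2*t*W^2)*K with hCdef
  have hC : 0 ≤ C := by
    have : 0 ≤ B + 2*t*W^2 := by positivity
    exact mul_nonneg this hK
  set s1 : ℝ := Real.sqrt (ε/(2*(C+1))) with hs1def
  have hs1 : 0 < s1 := Real.sqrt_pos.mpr (by positivity)
  set s : ℝ := min (δ/W) s1 with hsdef
  have hs : 0 < s := lt_min (by positivity) hs1
  have hsW : s*W ≤ δ := by
    have h1 : s ≤ δ/W := min_le_left _ _
    calc s*W ≤ (δ/W)*W := mul_le_mul_of_nonneg_right h1 hW.le
      _ = δ := by field_simp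
  set θs : EuclideanSpace ℝ (Fin p) := θ0 + s • w' with hθsdef
  have hu : θs - θ0 = s • w' := by rw [hθsdef]; abel
  have hnorm : ‖θs - θ0‖ = s*W := by
    rw [hu, norm_smul, Real.norm_eq_abs, abs_of_pos hs]
  have hnormpos : 0 < ‖θs - θ0‖ := by rw [hnorm]; positivity
  have hcoords : (fun i => (θs - θ0) i) = (s • w : Fin p → ℝ) := by
    funext i
    rw [hu]
    simp [hw'def]
  have hQu : (fun i => (θs - θ0) i) ⬝ᵥ M.mulVec (fun i => (θs - θ0) i) = s^2*B := by
    rw [hcoords, smul_dotProduct, Matrix.mulVec_smul, dotProduct_smul,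
      smul_eq_mul, smul_eq_mul, hQw]
    ring
  have hBw : c' ⬝ᵥ w = B := rfl
  have hcu : c' ⬝ᵥ (fun i => (θs - θ0) i) = s*B := by
    rw [hcoords, dotProduct_smul, smul_eq_mul, hBw]
  have hθsδ0 : ‖θs - θ0‖ < δ0 := by rw [hnorm]; exact lt_of_le_of_lt hsW hδlt
  have hI1s := hIbound θs hθsδ0
  have hG1s := hGbound θs hθsδ0
  rw [hcu] at hG1s
  rw [hQu] at hI1s
  rw [hnorm] at hI1s hG1s
  have hdpos : 0 < h θs - h θ0 := by
    have h1 := (abs_le.mp hG1s).1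
    have h2 : s*(B - t*W) > 0 := mul_pos hs (by linarith [htW])
    have h3 : s*(B - t*W) = s*B - t*(s*W) := by ring
    linarith [h1, h2, h3]
  have hne : h θs ≠ h θ0 := fun e => by rw [e] at hdpos; linarith
  have hd2lb : s^2*(B - t*W)^2 ≤ (h θ0 - h θs)^2 := by
    have h1 : s*(B - t*W) ≤ h θs - h θ0 := by
      have h0 := (abs_le.mp hG1s).1
      have h3 : s*(B - t*W) = s*B - t*(s*W) := by ring
      linarith [h0, h3]
    have h2 : 0 ≤ s*(B - t*W) := le_of_lt (mul_pos hs (by linarith [htW]))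
    have h3 : (s*(B - t*W))^2 ≤ (h θs - h θ0)^2 := pow_le_pow_left₀ h2 h1 2
    calc s^2*(B - t*W)^2 = (s*(B - t*W))^2 := by ring
      _ ≤ (h θs - h θ0)^2 := h3
      _ = (h θ0 - h θs)^2 := by ring
  have hd2lbpos : 0 < s^2*(B - t*W)^2 := by
    have hBtW : 0 < B - t*W := by linarith [htW]
    positivity
  have h2Iub : 2*I θs ≤ s^2*(B + 2*t*W^2) := by
    have h1 := (abs_le.mp hI1s).2
    have h2 : t*(s*W)^2 = t*s^2*W^2 := by ring
    linarith [h1, h2]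
  have h2Iubnn : 0 ≤ s^2*(B + 2*t*W^2) := by positivity
  have hsum : 1/(h θ0 - h θs)^2 + K ≤ 1/(s^2*(B - t*W)^2) + K := by
    have := one_div_le_one_div_of_le hd2lbpos hd2lb
    linarith
  have hsumnn : 0 ≤ 1/(h θ0 - h θs)^2 + K := by
    have : 0 < (h θ0 - h θs)^2 := lt_of_lt_of_le hd2lbpos hd2lb
    positivity
  have hfub : 2*I θs * (1/(h θ0 - h θs)^2 + K)
      ≤ s^2*(B + 2*t*W^2) * (1/(s^2*(B - t*W)^2) + K) := by
    rcases le_or_gt (2*I θs) 0 with hI0 | hI0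
    · have h1 : 2*I θs * (1/(h θ0 - h θs)^2 + K) ≤ 0 := mul_nonpos_of_nonpos_of_nonneg hI0 hsumnn
      have h2 : 0 ≤ s^2*(B + 2*t*W^2) * (1/(s^2*(B - t*W)^2) + K) := by positivity
      linarith
    · exact mul_le_mul h2Iub hsum hsumnn h2Iubnn
  have heval : s^2*(B + 2*t*W^2) * (1/(s^2*(B - t*W)^2) + K) = U t + s^2*C := by
    have hBtW : B - t*W ≠ 0 := by linarith [htW]
    rw [hUdef, hCdef]
    field_simp
  have hsC : s^2*C < ε/2 := by
    set E : ℝ := ε/(2*(C+1)) with hEdef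
    have hE : 0 < E := by positivity
    have hs2 : s^2 ≤ E := by
      have h1 : s ≤ s1 := min_le_right _ _
      have h2 : s^2 ≤ s1^2 := pow_le_pow_left₀ hs.le h1 2
      have h3 : s1^2 = E := Real.sq_sqrt (by positivity)
      linarith
    have hEC : E*C = ε/2 - E*1 - (ε/2 - E*(C+1)) + (0:ℝ) := by ring
    have hhalf : E*(C+1) = ε/2 := by rw [hEdef]; field_simp
    have h4 : E*C = ε/2 - E := by rw [hhalf] at hEC; linarith [hEC]
    have h5 : s^2*C ≤ E*C := mul_le_mul_of_nonneg_right hs2 hC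
    linarith
  have hmem : 2 * I θs * (1 / (h θ0 - h θs) ^ 2 + K) ∈ S :=
    ⟨θs, hnormpos, by rw [hnorm]; exact hsW, hne, rfl⟩
  have hSne : S.Nonempty := ⟨_, hmem⟩
  have hSbdd : BddBelow S := ⟨A t, hlow⟩
  have hInfle : sInf S ≤ 2 * I θs * (1 / (h θ0 - h θs) ^ 2 + K) := csInf_le hSbdd hmem
  have hleInf : A t ≤ sInf S := le_csInf hSne hlow
  have hub : 2 * I θs * (1 / (h θ0 - h θs) ^ 2 + K) < B⁻¹ + ε := by
    have h1 := abs_lt.mp hUt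
    calc 2 * I θs * (1 / (h θ0 - h θs) ^ 2 + K)
        ≤ s^2*(B + 2*t*W^2) * (1/(s^2*(B - t*W)^2) + K) := hfub
      _ = U t + s^2*C := heval
      _ < (B⁻¹ + ε/2) + ε/2 := by linarith [h1.2, hsC]
      _ = B⁻¹ + ε := by ring
  have hlb : B⁻¹ - ε < sInf S := by
    have h1 := abs_lt.mp hAt
    linarith [hleInf, h1.1]
  rw [Real.dist_eq, abs_sub_lt_iff]
  constructor <;> linarith [hInfle, hub, hlb]
end

section
/- Let 𝒳 be a finite set, M a symmetric positive definite p×p real matrix, θ⁰ ∈ ℝᵖ, K ≥ 0, and let I : ℝᵖ → ℝ satisfy I(θ) = ½ (θ − θ⁰)ᵀ M (θ − θ⁰) + o(‖θ − θ⁰‖²) as θ → θ⁰. For each x ∈ 𝒳 let α(x, ·) : ℝᵖ → ℝ be differentiable at θ⁰ with gradient f(x), and assume the vectors {f(x) : x ∈ 𝒳} span ℝᵖ. Define ρ(θ) = max_{x ∈ 𝒳} |α(x, θ⁰) − α(x, θ)|. Then lim_{δ → 0⁺} inf { 2 I(θ) (1/ρ(θ)² + K) : 0 < ‖θ − θ⁰‖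 ≤ δ } = (max_{x ∈ 𝒳} f(x)ᵀ M⁻¹ f(x))⁻¹. -/
open Filter Matrix

section Helpers
variable {p : ℕ}

theorem bilin_symm (M : Matrix (Fin p) (Fin p) ℝ) (hMsymm : M.IsSymm) (a b : Fin p → ℝ) :
    a ⬝ᵥ M.mulVec b = b ⬝ᵥ M.mulVec a := by
  simp only [dotProduct, mulVec, Finset.mul_sum]
  rw [Finset.sum_comm]
  exact Finset.sum_congr rfl fun j _ => Finset.sum_congr rfl fun i _ => by
    rw [hMsymm.apply]; ring

theorem bilin_nonneg (M : Matrix (Fin p) (Fin p) ℝ) (hM : M.PosDef) (a : Fin p → ℝ) :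
    0 ≤ a ⬝ᵥ M.mulVec a := by
  simpa using hM.posSemidef.re_dotProduct_nonneg a

theorem bilin_pos (M : Matrix (Fin p) (Fin p) ℝ) (hM : M.PosDef) (a : Fin p → ℝ) (ha : a ≠ 0) :
    0 < a ⬝ᵥ M.mulVec a := by
  simpa using hM.re_dotProduct_pos ha

theorem bilin_CS (M : Matrix (Fin p) (Fin p) ℝ) (hMsymm : M.IsSymm) (hM : M.PosDef)
    (a b : Fin p → ℝ) :
    (a ⬝ᵥ M.mulVec b) ^ 2 ≤ (a ⬝ᵥ M.mulVec a) * (b ⬝ᵥ M.mulVec b) := by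
  have key : ∀ t : ℝ, 0 ≤ (a ⬝ᵥ M.mulVec a) * (t * t) + (2 * (a ⬝ᵥ M.mulVec b)) * t
      + (b ⬝ᵥ M.mulVec b) := by
    intro t
    have h0 := bilin_nonneg M hM (t • a + b)
    have hexp : (t • a + b) ⬝ᵥ M.mulVec (t • a + b)
        = (a ⬝ᵥ M.mulVec a) * (t * t) + (2 * (a ⬝ᵥ M.mulVec b)) * t + (b ⬝ᵥ M.mulVec b) := by
      rw [mulVec_add, mulVec_smul, add_dotProduct, smul_dotProduct, dotProduct_add,
        dotProduct_add, dotProduct_smul, dotProduct_smul,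
        bilin_symm M hMsymm b a]
      simp only [smul_eq_mul]; ring
    linarith [hexp ▸ h0]
  have hd := discrim_le_zero key
  rw [discrim] at hd
  nlinarith [hd]

theorem Q_continuous (M : Matrix (Fin p) (Fin p) ℝ) :
    Continuous fun u : EuclideanSpace ℝ (Fin p) =>
      (fun i => u i) ⬝ᵥ M.mulVec (fun i => u i) := by
  simp only [dotProduct, mulVec]
  exact continuous_finset_sum _ fun i _ =>
    ((continuous_apply i).comp (PiLp.continuous_ofLp 2 _)).mul (continuous_finset_sum _ fun j _ =>
      continuous_const.mul ((continuous_apply j).comp (PiLp.continuous_ofLp 2 _)))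

theorem Q_smul (M : Matrix (Fin p) (Fin p) ℝ) (t : ℝ) (u : EuclideanSpace ℝ (Fin p)) :
    (fun i => (t • u) i) ⬝ᵥ M.mulVec (fun i => (t • u) i)
      = t ^ 2 * ((fun i => u i) ⬝ᵥ M.mulVec (fun i => u i)) := by
  have : (fun i => (t • u) i) = t • (fun i => u i) := by
    funext i; simp
  rw [this, smul_dotProduct, mulVec_smul, dotProduct_smul]
  simp [smul_eq_mul]; ring

theorem inner_eq_dot (a b : EuclideanSpace ℝ (Fin p)) :
    (inner ℝ a b : ℝ) = (fun i => a i) ⬝ᵥ (fun i => b i) := by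
  simp [PiLp.inner_apply, dotProduct, mul_comm]

theorem min_on_sphere (hp : 0 < p) (g : EuclideanSpace ℝ (Fin p) → ℝ) (hg : Continuous g) :
    ∃ u0 : EuclideanSpace ℝ (Fin p), ‖u0‖ = 1 ∧ ∀ u, ‖u‖ = 1 → g u0 ≤ g u := by
  have hne : (Metric.sphere (0 : EuclideanSpace ℝ (Fin p)) 1).Nonempty := by
    refine ⟨EuclideanSpace.single ⟨0, hp⟩ 1, ?_⟩
    simp [EuclideanSpace.norm_single]
  obtain ⟨u0, hu0, hmin⟩ := (isCompact_sphere (0 : EuclideanSpace ℝ (Fin p)) 1).exists_isMinOn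
    hne hg.continuousOn
  refine ⟨u0, by simpa using hu0, fun u hu => hmin (by simpa using hu)⟩

section H
variable {𝒳 : Type*} [Fintype 𝒳] [Nonempty 𝒳]

theorem h_continuous (f : 𝒳 → EuclideanSpace ℝ (Fin p)) :
    Continuous fun u : EuclideanSpace ℝ (Fin p) =>
      Finset.univ.sup' Finset.univ_nonempty (fun x => |(inner ℝ (f x) u : ℝ)|) := by
  exact Continuous.finset_sup'_apply _ fun x _ =>
    ((continuous_const.inner continuous_id).abs)

theorem h_smul (f : 𝒳 → EuclideanSpace ℝ (Fin p)) (t : ℝ) (u : EuclideanSpace ℝ (Fin p)) :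
    Finset.univ.sup' Finset.univ_nonempty (fun x => |(inner ℝ (f x) (t • u) : ℝ)|)
      = |t| * Finset.univ.sup' Finset.univ_nonempty (fun x => |(inner ℝ (f x) u : ℝ)|) := by
  have he : (fun x : 𝒳 => |(inner ℝ (f x) (t • u) : ℝ)|)
      = fun x => |t| * |(inner ℝ (f x) u : ℝ)| := by
    funext x; rw [real_inner_smul_right, abs_mul]
  rw [he]
  exact (Finset.comp_sup'_eq_sup'_comp _ (fun z => |t| * z)
    (fun x y => by exact mul_max_of_nonneg x y (abs_nonneg t))).symm

theorem h_pos (f : 𝒳 → EuclideanSpace ℝ (Fin p))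
    (hspan : Submodule.span ℝ (Set.range f) = ⊤)
    (u : EuclideanSpace ℝ (Fin p)) (hu : u ≠ 0) :
    0 < Finset.univ.sup' Finset.univ_nonempty (fun x => |(inner ℝ (f x) u : ℝ)|) := by
  by_contra hc
  push_neg at hc
  have hzero : ∀ x : 𝒳, (inner ℝ (f x) u : ℝ) = 0 := by
    intro x
    have := Finset.le_sup' (fun x => |(inner ℝ (f x) u : ℝ)|) (Finset.mem_univ x)
    have h2 : |(inner ℝ (f x) u : ℝ)| ≤ 0 := le_trans this hc
    exact abs_eq_zero.mp (le_antisymm h2 (abs_nonneg _))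
  have hu2 : (inner ℝ u u : ℝ) = 0 := by
    have hmem : u ∈ Submodule.span ℝ (Set.range f) := by rw [hspan]; trivial
    refine Submodule.span_induction (p := fun v _ => (inner ℝ v u : ℝ) = 0) ?_ ?_ ?_ ?_ hmem
    · rintro v ⟨x, rfl⟩; exact hzero x
    · simp
    · intro v w _ _ hv hw; rw [inner_add_left, hv, hw]; ring
    · intro c v _ hv; rw [real_inner_smul_left, hv]; ring
  exact hu (inner_self_eq_zero.mp hu2)

theorem h_lower (hp : 0 < p) (f : 𝒳 → EuclideanSpace ℝ (Fin p))
    (hspan : Submodule.span ℝ (Set.range f) = ⊤) :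
    ∃ c0 : ℝ, 0 < c0 ∧ ∀ u : EuclideanSpace ℝ (Fin p),
      c0 * ‖u‖ ≤ Finset.univ.sup' Finset.univ_nonempty (fun x => |(inner ℝ (f x) u : ℝ)|) := by
  obtain ⟨u0, hu0, hmin⟩ := min_on_sphere hp _ (h_continuous f)
  have hu0ne : u0 ≠ 0 := fun h => by simp [h] at hu0
  refine ⟨_, h_pos f hspan u0 hu0ne, fun u => ?_⟩
  rcases eq_or_ne u 0 with rfl | hu
  · simp
  · have hnorm : ‖u‖ ≠ 0 := norm_ne_zero_iff.mpr hu
    have hv : ‖(‖u‖⁻¹ • u)‖ = 1 := by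
      rw [norm_smul, norm_inv, norm_norm, inv_mul_cancel₀ hnorm]
    have := hmin _ hv
    have h2 := h_smul f (‖u‖⁻¹) u
    calc _ ≤ (Finset.univ.sup' Finset.univ_nonempty
          (fun x => |(inner ℝ (f x) (‖u‖⁻¹ • u) : ℝ)|)) * ‖u‖ := by
          apply mul_le_mul_of_nonneg_right this (norm_nonneg u)
      _ = _ := by
          rw [h2, abs_inv, abs_norm]
          field_simp

theorem sup'_abs_sub_le (a b : 𝒳 → ℝ) :
    |Finset.univ.sup' Finset.univ_nonempty (fun x => |a x|)
      - Finset.univ.sup' Finset.univ_nonempty (fun x => |b x|)|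
      ≤ ∑ x : 𝒳, |a x - b x| := by
  have key : ∀ c d : 𝒳 → ℝ, Finset.univ.sup' Finset.univ_nonempty (fun x => |c x|)
      ≤ Finset.univ.sup' Finset.univ_nonempty (fun x => |d x|) + ∑ x : 𝒳, |c x - d x| := by
    intro c d
    apply Finset.sup'_le
    intro x _
    have h1 : |c x| ≤ |d x| + |c x - d x| := by
      calc |c x| = |d x + (c x - d x)| := by ring_nf
        _ ≤ |d x| + |c x - d x| := abs_add_le _ _
    have h2 : |d x| ≤ Finset.univ.sup' Finset.univ_nonempty (fun x => |d x|) :=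
      Finset.le_sup' (fun y : 𝒳 => |d y|) (Finset.mem_univ x)
    have h3 : |c x - d x| ≤ ∑ y : 𝒳, |c y - d y| :=
      Finset.single_le_sum (f := fun y : 𝒳 => |c y - d y|) (fun y _ => abs_nonneg _)
        (Finset.mem_univ x)
    linarith
  rw [abs_sub_le_iff]
  constructor
  · linarith [key a b]
  · have := key b a
    have heq : ∑ x : 𝒳, |b x - a x| = ∑ x : 𝒳, |a x - b x| := by
      apply Finset.sum_congr rfl; intro x _; rw [abs_sub_comm]
    linarith
end H

theorem Q_bounds (hp : 0 < p) (M : Matrix (Fin p) (Fin p) ℝ) (hM : M.PosDef) :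
    ∃ lam Lam : ℝ, 0 < lam ∧ lam ≤ Lam ∧ ∀ u : EuclideanSpace ℝ (Fin p),
      lam * ‖u‖ ^ 2 ≤ (fun i => u i) ⬝ᵥ M.mulVec (fun i => u i)
      ∧ (fun i => u i) ⬝ᵥ M.mulVec (fun i => u i) ≤ Lam * ‖u‖ ^ 2 := by
  obtain ⟨u0, hu0, hmin⟩ := min_on_sphere hp _ (Q_continuous M)
  obtain ⟨u1, hu1, hmax⟩ := min_on_sphere hp _ (Q_continuous M).neg
  have hu0ne : (fun i => u0 i) ≠ 0 := by
    intro h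
    have : u0 = 0 := by ext i; exact congrFun h i
    simp [this] at hu0
  have hlam : 0 < (fun i => u0 i) ⬝ᵥ M.mulVec (fun i => u0 i) := bilin_pos M hM _ hu0ne
  have hll : (fun i => u0 i) ⬝ᵥ M.mulVec (fun i => u0 i)
      ≤ (fun i => u1 i) ⬝ᵥ M.mulVec (fun i => u1 i) := by
    have h1 := hmin u1 hu1
    have h2 := hmax u0 hu0
    simp only [Pi.neg_apply, neg_le_neg_iff] at h2
    linarith
  refine ⟨_, (fun i => u1 i) ⬝ᵥ M.mulVec (fun i => u1 i), hlam, hll, fun u => ?_⟩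
  rcases eq_or_ne u 0 with rfl | hu
  · have : ((fun i => (0 : EuclideanSpace ℝ (Fin p)) i) : Fin p → ℝ) = 0 := funext fun i => rfl
    simp [this]
  · have hnorm : ‖u‖ ≠ 0 := norm_ne_zero_iff.mpr hu
    set v : EuclideanSpace ℝ (Fin p) := ‖u‖⁻¹ • u with hv
    have hvnorm : ‖v‖ = 1 := by
      rw [hv, norm_smul, norm_inv, norm_norm, inv_mul_cancel₀ hnorm]
    have huv : u = ‖u‖ • v := by rw [hv, smul_smul, mul_inv_cancel₀ hnorm, one_smul]
    have hQu : (fun i => u i) ⬝ᵥ M.mulVec (fun i => u i)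
        = ‖u‖ ^ 2 * ((fun i => v i) ⬝ᵥ M.mulVec (fun i => v i)) := by
      conv_lhs => rw [huv]
      rw [Q_smul]
    constructor
    · rw [hQu, mul_comm (‖u‖^2)]
      apply mul_le_mul_of_nonneg_right (hmin v hvnorm) (sq_nonneg _)
    · rw [hQu, mul_comm _ (‖u‖^2)]
      apply mul_le_mul_of_nonneg_left _ (sq_nonneg _)
      have := hmax v hvnorm
      simpa using this

end Helpers

set_option maxHeartbeats 3200000 in
/-- **Theorem 1, extended G-optimality case.** If `I` has quadratic expansion
`I(θ) = ½ (θ−θ0)ᵀ M (θ−θ0) + o(‖θ−θ0‖²)` with `M` symmetric positive definite,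
`K ≥ 0`, each regression function `α x` is differentiable at `θ0` with gradient `f x`,
the gradients `f x` span `ℝᵖ`, and `ρ(θ) = max_{x} |α(x,θ0) − α(x,θ)|`, then
`inf { 2 I(θ) (1/ρ(θ)² + K) : 0 < ‖θ−θ0‖ ≤ δ }` tends, as `δ → 0⁺`, to
`(max_x f(x)ᵀ M⁻¹ f(x))⁻¹`. -/
theorem extended_G_optimality_limit
    {p : ℕ} {𝒳 : Type*} [Fintype 𝒳] [Nonempty 𝒳]
    (M : Matrix (Fin p) (Fin p) ℝ)
    (hMsymm : M.IsSymm) (hM : M.PosDef)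
    (θ0 : EuclideanSpace ℝ (Fin p)) (K : ℝ) (hK : 0 ≤ K)
    (I : EuclideanSpace ℝ (Fin p) → ℝ)
    (hI : (fun θ => I θ - (1 / 2) * dotProduct (fun i => (θ - θ0) i)
        (M.mulVec (fun i => (θ - θ0) i)))
      =o[nhds θ0] fun θ => ‖θ - θ0‖ ^ 2)
    (α : 𝒳 → EuclideanSpace ℝ (Fin p) → ℝ) (f : 𝒳 → EuclideanSpace ℝ (Fin p))
    (hα : ∀ x : 𝒳, HasGradientAt (α x) (f x) θ0)
    (hspan : Submodule.span ℝ (Set.range f) = ⊤)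
    (ρ : EuclideanSpace ℝ (Fin p) → ℝ)
    (hρ : ∀ θ, ρ θ = ⨆ x : 𝒳, |α x θ0 - α x θ|) :
    Tendsto
      (fun δ : ℝ => sInf {v : ℝ | ∃ θ : EuclideanSpace ℝ (Fin p),
        0 < ‖θ - θ0‖ ∧ ‖θ - θ0‖ ≤ δ ∧ v = 2 * I θ * (1 / ρ θ ^ 2 + K)})
      (nhdsWithin 0 (Set.Ioi 0))
      (nhds (⨆ x : 𝒳,
        dotProduct (fun i => f x i) (M⁻¹.mulVec (fun i => f x i)))⁻¹) := by
  classical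
  rcases Nat.eq_zero_or_pos p with hp0 | hp
  · -- degenerate case p = 0
    subst hp0
    have hnorm0 : ∀ θ : EuclideanSpace ℝ (Fin 0), ‖θ - θ0‖ = 0 := by
      intro θ
      rw [EuclideanSpace.norm_eq]
      simp
    have hset : ∀ δ : ℝ, {v : ℝ | ∃ θ : EuclideanSpace ℝ (Fin 0),
        0 < ‖θ - θ0‖ ∧ ‖θ - θ0‖ ≤ δ ∧ v = 2 * I θ * (1 / ρ θ ^ 2 + K)} = ∅ := by
      intro δ
      ext v
      simp only [Set.mem_setOf_eq, Set.mem_empty_iff_false, iff_false]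
      rintro ⟨θ, h1, -, -⟩
      rw [hnorm0 θ] at h1
      exact lt_irrefl 0 h1
    have hCz : (⨆ x : 𝒳, dotProduct (fun i => f x i)
        (M⁻¹.mulVec (fun i => f x i))) = 0 := by
      have : ∀ x : 𝒳, dotProduct (fun i => f x i) (M⁻¹.mulVec (fun i => f x i)) = 0 := by
        intro x
        simp [dotProduct]
      simp only [this]
      exact ciSup_const
    simp only [hset, Real.sInf_empty, hCz, _root_.inv_zero]
    exact tendsto_const_nhds
  · -- main case 0 < p
    obtain ⟨Qv, hQv⟩ : ∃ Q : EuclideanSpace ℝ (Fin p) → ℝ,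
        Q = fun u => (fun i => u i) ⬝ᵥ M.mulVec (fun i => u i) := ⟨_, rfl⟩
    obtain ⟨h, hh⟩ : ∃ h : EuclideanSpace ℝ (Fin p) → ℝ, h = fun u =>
      Finset.univ.sup' Finset.univ_nonempty (fun x => |(inner ℝ (f x) u : ℝ)|) := ⟨_, rfl⟩
    obtain ⟨gfun, hgfun⟩ : ∃ g : 𝒳 → ℝ,
        g = fun x => (fun i => f x i) ⬝ᵥ M⁻¹.mulVec (fun i => f x i) := ⟨_, rfl⟩
    obtain ⟨C, hC⟩ : ∃ C : ℝ, C = ⨆ x : 𝒳, gfun x := ⟨_, rfl⟩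
    have hgoal : (⨆ x : 𝒳, dotProduct (fun i => f x i)
        (M⁻¹.mulVec (fun i => f x i))) = C := by rw [hC, hgfun]
    rw [hgoal]
    obtain ⟨lam, Lam, hlam, hlamLam, hQb0⟩ := Q_bounds hp M hM
    have hQb : ∀ u : EuclideanSpace ℝ (Fin p),
        lam * ‖u‖ ^ 2 ≤ Qv u ∧ Qv u ≤ Lam * ‖u‖ ^ 2 := fun u => by rw [hQv]; exact hQb0 u
    have hLam : 0 < Lam := lt_of_lt_of_le hlam hlamLam
    obtain ⟨c0, hc0, hhl0⟩ := h_lower hp f hspan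
    have hhl : ∀ u : EuclideanSpace ℝ (Fin p), c0 * ‖u‖ ≤ h u := fun u => by
      rw [hh]; exact hhl0 u
    have hQnn : ∀ u : EuclideanSpace ℝ (Fin p), 0 ≤ Qv u := fun u => by
      rw [hQv]; exact bilin_nonneg M hM _
    obtain ⟨xs, hxs⟩ := Finite.exists_max gfun
    have hbdd : BddAbove (Set.range gfun) := (Set.finite_range gfun).bddAbove
    have hCeq : C = gfun xs := by
      rw [hC]; exact le_antisymm (ciSup_le hxs) (le_ciSup hbdd xs)
    have hfx0 : ∃ x0 : 𝒳, f x0 ≠ 0 := by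
      by_contra hcon
      push_neg at hcon
      have hbot : Submodule.span ℝ (Set.range f) = ⊥ :=
        Submodule.span_eq_bot.mpr (by rintro v ⟨x, rfl⟩; exact hcon x)
      rw [hspan] at hbot
      have he : (EuclideanSpace.single (⟨0, hp⟩ : Fin p) (1:ℝ)
          : EuclideanSpace ℝ (Fin p)) = 0 := by
        rw [← Submodule.mem_bot (R := ℝ), ← hbot]; trivial
      have := congrArg norm he
      simp [EuclideanSpace.norm_single] at this
    have hdetu : IsUnit M.det := hM.det_pos.ne'.isUnit
    have hMMinv : ∀ v : Fin p → ℝ, M.mulVec (M⁻¹.mulVec v) = v := by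
      intro v
      rw [Matrix.mulVec_mulVec, Matrix.mul_nonsing_inv _ hdetu, Matrix.one_mulVec]
    have hgpos : 0 < C := by
      obtain ⟨x0, hx0⟩ := hfx0
      have hfv : (fun i => f x0 i) ≠ 0 := by
        intro hcon
        exact hx0 (by ext i; exact congrFun hcon i)
      have h1 : 0 < gfun x0 := by rw [hgfun]; exact bilin_pos M⁻¹ hM.inv _ hfv
      calc (0:ℝ) < gfun x0 := h1
        _ ≤ gfun xs := hxs x0
        _ = C := hCeq.symm
    have hCS : ∀ (x : 𝒳) (u : EuclideanSpace ℝ (Fin p)),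
        (inner ℝ (f x) u : ℝ)^2 ≤ C * Qv u := by
      intro x u
      rw [hQv]
      have h1 : (inner ℝ (f x) u : ℝ)
          = (fun i => u i) ⬝ᵥ M.mulVec (M⁻¹.mulVec (fun i => f x i)) := by
        rw [inner_eq_dot, dotProduct_comm, hMMinv]
      have h2 := bilin_CS M hMsymm hM (fun i => u i) (M⁻¹.mulVec (fun i => f x i))
      have h3 : (M⁻¹.mulVec (fun i => f x i)) ⬝ᵥ M.mulVec (M⁻¹.mulVec (fun i => f x i))
          = gfun x := by
        rw [hMMinv, dotProduct_comm, hgfun]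
      have h4 : gfun x ≤ C := le_trans (hxs x) (le_of_eq hCeq.symm)
      rw [h1]
      calc ((fun i => u i) ⬝ᵥ M.mulVec (M⁻¹.mulVec (fun i => f x i)))^2
          ≤ ((fun i => u i) ⬝ᵥ M.mulVec (fun i => u i))
            * ((M⁻¹.mulVec (fun i => f x i)) ⬝ᵥ M.mulVec (M⁻¹.mulVec (fun i => f x i))) := h2
        _ = ((fun i => u i) ⬝ᵥ M.mulVec (fun i => u i)) * gfun x := by rw [h3]
        _ ≤ ((fun i => u i) ⬝ᵥ M.mulVec (fun i => u i)) * C :=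
            mul_le_mul_of_nonneg_left h4 (bilin_nonneg M hM _)
        _ = C * ((fun i => u i) ⬝ᵥ M.mulVec (fun i => u i)) := mul_comm _ _
    have hh0 : ∀ u : EuclideanSpace ℝ (Fin p), 0 ≤ h u := by
      intro u
      rw [hh]
      calc (0:ℝ) ≤ |(inner ℝ (f xs) u : ℝ)| := abs_nonneg _
        _ ≤ _ := Finset.le_sup' (fun x : 𝒳 => |(inner ℝ (f x) u : ℝ)|) (Finset.mem_univ xs)
    have hhC : ∀ u : EuclideanSpace ℝ (Fin p), h u ^ 2 ≤ C * Qv u := by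
      intro u
      obtain ⟨xw, -, hxw⟩ := Finset.exists_mem_eq_sup' Finset.univ_nonempty
        (fun x => |(inner ℝ (f x) u : ℝ)|)
      simp only [hh]
      rw [hxw, sq_abs]
      exact hCS xw u
    have hhub : ∀ u : EuclideanSpace ℝ (Fin p), h u ≤ Real.sqrt (C * Lam) * ‖u‖ := by
      intro u
      have h1 : h u ^ 2 ≤ C * Lam * ‖u‖^2 := by
        calc h u ^2 ≤ C * Qv u := hhC u
          _ ≤ C * (Lam * ‖u‖^2) := mul_le_mul_of_nonneg_left (hQb u).2 (le_of_lt hgpos)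
          _ = C * Lam * ‖u‖^2 := by ring
      have h2 : Real.sqrt (h u ^ 2) ≤ Real.sqrt (C * Lam * ‖u‖^2) := Real.sqrt_le_sqrt h1
      rw [Real.sqrt_sq (hh0 u)] at h2
      rw [show C * Lam * ‖u‖^2 = (Real.sqrt (C*Lam) * ‖u‖)^2 by
        rw [mul_pow, Real.sq_sqrt (mul_nonneg hgpos.le hLam.le)]] at h2
      rwa [Real.sqrt_sq (mul_nonneg (Real.sqrt_nonneg _) (norm_nonneg _))] at h2
    have hα' : ∀ x : 𝒳, (fun θ : EuclideanSpace ℝ (Fin p) =>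
        α x θ - α x θ0 - (inner ℝ (f x) (θ - θ0) : ℝ))
        =o[nhds θ0] fun θ => θ - θ0 := by
      intro x
      have hfd := ((hα x).hasFDerivAt).isLittleO
      simpa [InnerProductSpace.toDual_apply_apply] using hfd
    obtain ⟨r, hrdef⟩ : ∃ r : EuclideanSpace ℝ (Fin p) → ℝ, r = fun θ =>
      ∑ x : 𝒳, |α x θ0 - α x θ + (inner ℝ (f x) (θ - θ0) : ℝ)| := ⟨_, rfl⟩
    have hrnn : ∀ θ, 0 ≤ r θ := fun θ => by
      rw [hrdef]; exact Finset.sum_nonneg fun x _ => abs_nonneg _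
    have hr : r =o[nhds θ0] fun θ => ‖θ - θ0‖ := by
      rw [hrdef]
      refine (Asymptotics.IsLittleO.sum (s := Finset.univ)
        (A := fun x θ => |α x θ0 - α x θ + (inner ℝ (f x) (θ - θ0) : ℝ)|) ?_).congr_left
        (fun θ => Finset.sum_apply _ _ _)
      intro x _
      have h1 := ((hα' x).neg_left).abs_left.norm_right
      apply h1.congr' _ (Filter.Eventually.of_forall fun θ => rfl)
      apply Filter.Eventually.of_forall
      intro θ
      congr 1
      ring
    have hρ' : ∀ θ, ρ θ = Finset.univ.sup' Finset.univ_nonempty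
        (fun x => |α x θ0 - α x θ|) := by
      intro θ
      rw [hρ, ← Finset.sup'_univ_eq_ciSup]
    have hρnn : ∀ θ, 0 ≤ ρ θ := by
      intro θ
      rw [hρ' θ]
      calc (0:ℝ) ≤ |α xs θ0 - α xs θ| := abs_nonneg _
        _ ≤ _ := Finset.le_sup' (fun x : 𝒳 => |α x θ0 - α x θ|) (Finset.mem_univ xs)
    have hρh : ∀ θ : EuclideanSpace ℝ (Fin p), |ρ θ - h (θ - θ0)| ≤ r θ := by
      intro θ
      rw [hρ' θ, hh, hrdef]
      have := sup'_abs_sub_le (fun x => α x θ0 - α x θ)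
        (fun x => -(inner ℝ (f x) (θ - θ0) : ℝ))
      simp only [abs_neg, sub_neg_eq_add] at this
      exact this
    have pack : ∀ c₁ c₂ : ℝ, 0 < c₁ → 0 < c₂ → ∃ δ₁ : ℝ, 0 < δ₁ ∧
        ∀ θ : EuclideanSpace ℝ (Fin p), ‖θ - θ0‖ ≤ δ₁ →
        |I θ - 1/2 * Qv (θ - θ0)| ≤ c₁ * ‖θ - θ0‖^2
          ∧ |ρ θ - h (θ - θ0)| ≤ c₂ * ‖θ - θ0‖ := by
      intro c₁ c₂ hc₁ hc₂
      have e1 := Asymptotics.isLittleO_iff.mp hI hc₁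
      have e2 := Asymptotics.isLittleO_iff.mp hr hc₂
      have e3 := e1.and e2
      rw [Metric.eventually_nhds_iff] at e3
      obtain ⟨ε, hε, hball⟩ := e3
      refine ⟨ε/2, by positivity, fun θ hθ => ?_⟩
      have hd : dist θ θ0 < ε := by rw [dist_eq_norm]; linarith
      obtain ⟨p1, p2⟩ := hball hd
      constructor
      · rw [hQv]
        rw [Real.norm_eq_abs, Real.norm_eq_abs, abs_of_nonneg (sq_nonneg ‖θ - θ0‖)] at p1
        exact p1
      · have p2' : r θ ≤ c₂ * ‖θ - θ0‖ := by
          rw [Real.norm_eq_abs, abs_of_nonneg (hrnn θ), norm_norm] at p2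
          exact p2
        exact le_trans (hρh θ) p2'
    -- lower bound
    have key_lower : ∀ L' : ℝ, L' < C⁻¹ → ∃ δ₁ : ℝ, 0 < δ₁ ∧
        ∀ θ : EuclideanSpace ℝ (Fin p), 0 < ‖θ - θ0‖ → ‖θ - θ0‖ ≤ δ₁ →
          L' ≤ 2 * I θ * (1 / ρ θ ^ 2 + K) := by
      intro L' hL'
      rcases le_or_gt L' 0 with hL0 | hL0
      · obtain ⟨δ₁, hδ₁, hδp⟩ := pack (lam/2) 1 (by positivity) one_pos
        refine ⟨δ₁, hδ₁, fun θ hθ1 hθ2 => ?_⟩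
        obtain ⟨p1, p2⟩ := hδp θ hθ2
        have hq := (hQb (θ - θ0)).1
        have habs1 := abs_le.mp p1
        have hI2 : 0 ≤ 2 * I θ := by linarith [habs1.1, hq]
        have hfrac : 0 ≤ 1 / ρ θ^2 + K := add_nonneg (by positivity) hK
        calc L' ≤ 0 := hL0
          _ ≤ _ := mul_nonneg hI2 hfrac
      · have hA : 0 < 1 - L' * C := by
          have h1 : L' * C < C⁻¹ * C := mul_lt_mul_of_pos_right hL' hgpos
          rw [inv_mul_cancel₀ hgpos.ne'] at h1
          linarith
        obtain ⟨D, hDdef⟩ : ∃ D : ℝ, D = 2 * Real.sqrt (C * Lam) + 1 := ⟨_, rfl⟩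
        have hD1 : (1:ℝ) ≤ D := by
          have := Real.sqrt_nonneg (C * Lam); rw [hDdef]; linarith
        have hD0 : (0:ℝ) < D := lt_of_lt_of_le one_pos hD1
        have hc₁ : 0 < (1 - L' * C) * lam / 8 := by
          apply div_pos (mul_pos hA hlam); norm_num
        obtain ⟨c₂, hc₂def⟩ : ∃ c₂ : ℝ,
          c₂ = min (c0/2) (min 1 ((1 - L' * C) * lam / (8 * L' * D))) := ⟨_, rfl⟩
        have hc₂pos : 0 < c₂ := by
          rw [hc₂def]
          apply lt_min (by positivity)
          apply lt_min one_pos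
          apply div_pos (mul_pos hA hlam)
          have h8 : 0 < L' * D := mul_pos hL0 hD0
          linarith
        obtain ⟨δ₁, hδ₁, hδp⟩ := pack ((1 - L' * C) * lam / 8) c₂ hc₁ hc₂pos
        refine ⟨δ₁, hδ₁, fun θ hθ1 hθ2 => ?_⟩
        obtain ⟨p1, p2⟩ := hδp θ hθ2
        have hq1 := (hQb (θ - θ0)).1
        have hq2 := (hQb (θ - θ0)).2
        have habs1 := abs_le.mp p1
        have habs2 := abs_le.mp p2
        have hc₂c0 : c₂ ≤ c0/2 := by rw [hc₂def]; exact min_le_left _ _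
        have hc₂1 : c₂ ≤ 1 := by
          rw [hc₂def]; exact le_trans (min_le_right _ _) (min_le_left _ _)
        have hc₂main : c₂ ≤ (1 - L' * C) * lam / (8 * L' * D) := by
          rw [hc₂def]; exact le_trans (min_le_right _ _) (min_le_right _ _)
        have hn0 : 0 ≤ ‖θ - θ0‖ := norm_nonneg _
        have hρlb : (c0/2) * ‖θ - θ0‖ ≤ ρ θ := by
          have t1 := hhl (θ - θ0)
          have t2 : c₂ * ‖θ - θ0‖ ≤ (c0/2) * ‖θ - θ0‖ :=
            mul_le_mul_of_nonneg_right hc₂c0 hn0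
          linarith [habs2.1]
        have hρpos : 0 < ρ θ := lt_of_lt_of_le (mul_pos (half_pos hc0) hθ1) hρlb
        have hs1 : ρ θ^2 ≤ C * Qv (θ - θ0) + c₂ * D * ‖θ - θ0‖^2 := by
          have hub : ρ θ ≤ h (θ-θ0) + c₂ * ‖θ-θ0‖ := by linarith [habs2.2]
          have e1 : ρ θ^2 ≤ (h (θ-θ0) + c₂ * ‖θ-θ0‖)^2 := pow_le_pow_left₀ (hρnn θ) hub 2
          have e3 := hhub (θ - θ0)
          have e4 := hhC (θ - θ0)
          have b0 : 0 ≤ 2*c₂*‖θ-θ0‖ := by positivity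
          have b1 : h (θ-θ0) * (2*c₂*‖θ-θ0‖)
              ≤ (Real.sqrt (C*Lam)*‖θ-θ0‖) * (2*c₂*‖θ-θ0‖) :=
            mul_le_mul_of_nonneg_right e3 b0
          have c1 : c₂*c₂*‖θ-θ0‖^2 ≤ c₂*‖θ-θ0‖^2 := by
            have c2 : c₂*c₂ ≤ 1*c₂ := mul_le_mul_of_nonneg_right hc₂1 hc₂pos.le
            have c3 := mul_le_mul_of_nonneg_right c2 (sq_nonneg ‖θ-θ0‖)
            calc c₂*c₂*‖θ-θ0‖^2 ≤ 1*c₂*‖θ-θ0‖^2 := c3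
              _ = c₂*‖θ-θ0‖^2 := by ring
          rw [hDdef]
          linarith [e1, e4, b1, c1]
        have hs2 : Qv (θ-θ0) - 2*((1 - L' * C) * lam / 8)*‖θ-θ0‖^2 ≤ 2 * I θ := by
          linarith [habs1.1]
        have hLc₂D : L' * c₂ * D ≤ (1 - L' * C) * lam / 8 := by
          have hLD : 0 < L' * D := mul_pos hL0 hD0
          have t := mul_le_mul_of_nonneg_left hc₂main hLD.le
          calc L' * c₂ * D = (L' * D) * c₂ := by ring
            _ ≤ (L' * D) * ((1 - L' * C) * lam / (8 * L' * D)) := t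
            _ = (1 - L' * C) * lam / 8 := by field_simp
        have hAQ : (1 - L' * C) * (lam * ‖θ-θ0‖^2) ≤ (1 - L' * C) * Qv (θ-θ0) :=
          mul_le_mul_of_nonneg_left hq1 hA.le
        have m1 : L' * c₂ * D * ‖θ-θ0‖^2 ≤ ((1 - L' * C) * lam / 8) * ‖θ-θ0‖^2 :=
          mul_le_mul_of_nonneg_right hLc₂D (sq_nonneg _)
        have m2 : 0 ≤ (1 - L' * C) * lam * ‖θ-θ0‖^2 :=
          mul_nonneg (mul_nonneg hA.le hlam.le) (sq_nonneg _)
        have t1 : L' * ρ θ^2 ≤ L' * (C * Qv (θ-θ0) + c₂ * D * ‖θ-θ0‖^2) :=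
          mul_le_mul_of_nonneg_left hs1 hL0.le
        have hkey : L' * ρ θ^2 ≤ 2 * I θ := by linarith [t1, m1, hs2, hAQ, m2]
        have hρsq : 0 < ρ θ^2 := pow_pos hρpos 2
        have hI0 : 0 ≤ 2 * I θ := le_trans (mul_nonneg hL0.le hρsq.le) hkey
        have step1 : L' ≤ 2 * I θ / ρ θ^2 := (le_div_iff₀ hρsq).mpr hkey
        calc L' ≤ 2 * I θ / ρ θ^2 := step1
          _ = 2 * I θ * (1 / ρ θ^2) := by ring
          _ ≤ 2 * I θ * (1 / ρ θ^2 + K) :=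
            mul_le_mul_of_nonneg_left (by linarith) hI0
    -- near-optimal direction
    obtain ⟨ustar, hustar⟩ : ∃ u : EuclideanSpace ℝ (Fin p),
        (fun i => u i) = M⁻¹.mulVec (fun i => f xs i) :=
      ⟨(WithLp.equiv 2 (Fin p → ℝ)).symm (M⁻¹.mulVec (fun i => f xs i)), funext fun i => rfl⟩
    have hQraw : (fun i => ustar i) ⬝ᵥ M.mulVec (fun i => ustar i) = C := by
      rw [hustar, hMMinv, dotProduct_comm, hCeq]
      simp only [hgfun]
    have hinner : (inner ℝ (f xs) ustar : ℝ) = C := by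
      rw [inner_eq_dot, hustar, hCeq]
      simp only [hgfun]
    have hhstar : C ≤ h ustar := by
      simp only [hh]
      calc C = |(inner ℝ (f xs) ustar : ℝ)| := by rw [hinner, abs_of_nonneg hgpos.le]
        _ ≤ _ := Finset.le_sup' (fun x : 𝒳 => |(inner ℝ (f x) ustar : ℝ)|) (Finset.mem_univ xs)
    have hhstarpos : 0 < h ustar := lt_of_lt_of_le hgpos hhstar
    have hustar0 : ustar ≠ 0 := by
      intro hcon
      rw [hcon, inner_zero_right] at hinner
      exact hgpos.ne hinner
    have hns : 0 < ‖ustar‖ := norm_pos_iff.mpr hustar0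
    -- the curve t ↦ θ0 + t • ustar
    obtain ⟨crv, hcrv⟩ : ∃ c : ℝ → EuclideanSpace ℝ (Fin p),
        c = fun t => θ0 + t • ustar := ⟨_, rfl⟩
    have hct : ∀ t : ℝ, crv t - θ0 = t • ustar := by
      intro t; simp only [hcrv]; exact add_sub_cancel_left θ0 _
    have hctn : ∀ t : ℝ, ‖crv t - θ0‖ = |t| * ‖ustar‖ := by
      intro t; rw [hct, norm_smul, Real.norm_eq_abs]
    have hcc : Filter.Tendsto crv (nhdsWithin 0 (Set.Ioi 0)) (nhds θ0) := by
      rw [hcrv]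
      have h1 : Filter.Tendsto (fun t : ℝ => θ0 + t • ustar) (nhds 0)
          (nhds (θ0 + (0:ℝ) • ustar)) :=
        (continuous_const.add ((continuous_id.smul continuous_const))).tendsto 0
      simp only [zero_smul, add_zero] at h1
      exact h1.mono_left nhdsWithin_le_nhds
    -- A-part : 2 I (crv t) / t² → C
    have hA : Tendsto (fun t : ℝ => 2 * I (crv t) / t^2)
        (nhdsWithin 0 (Set.Ioi 0)) (nhds C) := by
      have o1 := hI.comp_tendsto hcc
      have o2 : (fun t : ℝ => I (crv t) - 1/2 * (t^2 * C))
          =o[nhdsWithin 0 (Set.Ioi 0)] fun t : ℝ => t^2 * ‖ustar‖^2 := by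
        apply o1.congr' _ _
        · apply Filter.Eventually.of_forall
          intro t
          simp only [Function.comp]
          rw [hct, Q_smul, hQraw]
        · apply Filter.Eventually.of_forall
          intro t
          simp only [Function.comp]
          rw [hctn, mul_pow, sq_abs]
      have o3 : (fun t : ℝ => t^2 * ‖ustar‖^2) =O[nhdsWithin 0 (Set.Ioi 0)]
          fun t : ℝ => t^2 := by
        rw [Asymptotics.isBigO_iff]
        refine ⟨‖ustar‖^2, Filter.Eventually.of_forall fun t => le_of_eq ?_⟩
        rw [Real.norm_eq_abs, Real.norm_eq_abs, abs_mul, abs_of_nonneg (sq_nonneg ‖ustar‖)]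
        ring
      have hdiv := (o2.trans_isBigO o3).tendsto_div_nhds_zero
      have base : Tendsto (fun t : ℝ => 2*((I (crv t) - 1/2*(t^2*C))/t^2) + C)
          (nhdsWithin 0 (Set.Ioi 0)) (nhds (2*0 + C)) :=
        (hdiv.const_mul 2).add tendsto_const_nhds
      rw [show (2:ℝ)*0 + C = C by ring] at base
      apply base.congr'
      filter_upwards [self_mem_nhdsWithin] with t ht
      have ht' : (t:ℝ) ≠ 0 := ne_of_gt ht
      field_simp
      ring
    -- B-part : ρ (crv t) / t → h ustar
    have hB : Tendsto (fun t : ℝ => ρ (crv t)/t)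
        (nhdsWithin 0 (Set.Ioi 0)) (nhds (h ustar)) := by
      have oR := hr.comp_tendsto hcc
      have oR2 : (fun t : ℝ => r (crv t)) =o[nhdsWithin 0 (Set.Ioi 0)] fun t : ℝ => t := by
        apply oR.trans_isBigO
        rw [Asymptotics.isBigO_iff]
        refine ⟨‖ustar‖, Filter.Eventually.of_forall fun t => le_of_eq ?_⟩
        simp only [Function.comp]
        rw [norm_norm, hctn, Real.norm_eq_abs]
        ring
      have hrdiv := oR2.tendsto_div_nhds_zero
      have hB0 : Tendsto (fun t : ℝ => ρ (crv t)/t - h ustar)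
          (nhdsWithin 0 (Set.Ioi 0)) (nhds 0) := by
        apply squeeze_zero_norm' _ hrdiv
        filter_upwards [self_mem_nhdsWithin] with t ht
        have ht0 : (0:ℝ) < t := ht
        have hb := hρh (crv t)
        rw [hct t] at hb
        have hsm : h (t • ustar) = |t| * h ustar := by
          simp only [hh]; exact h_smul f t ustar
        rw [hsm, abs_of_pos ht0] at hb
        rw [Real.norm_eq_abs]
        rw [show ρ (crv t)/t - h ustar = (ρ (crv t) - t * h ustar)/t by field_simp]
        rw [abs_div, abs_of_pos ht0]
        gcongr
      have h2 := hB0.add (tendsto_const_nhds (x := h ustar))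
      simp only [sub_add_cancel, zero_add] at h2
      exact h2
    -- eventually ρ (crv t) > 0
    have hev : ∀ᶠ t in nhdsWithin 0 (Set.Ioi 0), 0 < ρ (crv t) := by
      have h1 : ∀ᶠ t in nhdsWithin 0 (Set.Ioi 0), h ustar/2 < ρ (crv t)/t :=
        hB.eventually_const_lt (half_lt_self hhstarpos)
      filter_upwards [h1, self_mem_nhdsWithin] with t h2 ht
      have ht0 : (0:ℝ) < t := ht
      have h3 : 0 < ρ (crv t)/t := lt_trans (half_pos hhstarpos) h2
      have := mul_pos h3 ht0
      rwa [div_mul_cancel₀ _ ht0.ne'] at this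
    -- limit of the test value
    have hψ : Tendsto (fun t : ℝ => 2 * I (crv t) * (1 / ρ (crv t)^2 + K))
        (nhdsWithin 0 (Set.Ioi 0)) (nhds (C * ((h ustar)⁻¹^2 + K * 0^2))) := by
      have htK : Tendsto (fun t : ℝ => K*t^2) (nhdsWithin 0 (Set.Ioi 0)) (nhds (K*0^2)) :=
        ((continuous_const.mul (continuous_pow 2)).tendsto 0).mono_left nhdsWithin_le_nhds
      have hT : Tendsto (fun t : ℝ => (2*I (crv t)/t^2) * (((ρ (crv t)/t)⁻¹)^2 + K*t^2))
          (nhdsWithin 0 (Set.Ioi 0)) (nhds (C * ((h ustar)⁻¹^2 + K*0^2))) :=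
        hA.mul ((((hB.inv₀ hhstarpos.ne').pow 2)).add htK)
      apply hT.congr'
      filter_upwards [self_mem_nhdsWithin, hev] with t ht hρt
      have ht0 : (0:ℝ) < t := ht
      field_simp
    have hlim : C * ((h ustar)⁻¹^2 + K * 0^2) ≤ C⁻¹ := by
      have i1 : (h ustar)⁻¹ ≤ C⁻¹ := inv_anti₀ hgpos hhstar
      have i2 : 0 < (h ustar)⁻¹ := inv_pos.mpr hhstarpos
      have i3 : C * C⁻¹ = 1 := mul_inv_cancel₀ hgpos.ne'
      have goal2 : C * ((h ustar)⁻¹^2) ≤ C⁻¹ := by nlinarith [i1, i2, i3, hgpos]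
      calc C * ((h ustar)⁻¹^2 + K * 0^2) = C * ((h ustar)⁻¹^2) := by ring
        _ ≤ C⁻¹ := goal2
    -- final assembly
    rw [Metric.tendsto_nhds]
    intro ε hε
    have hmin2 : 0 < min (ε/2) (C⁻¹/2) := lt_min (half_pos hε) (half_pos (inv_pos.mpr hgpos))
    obtain ⟨δ₁, hδ₁, hlow⟩ := key_lower (C⁻¹ - min (ε/2) (C⁻¹/2)) (by linarith)
    have hup0 : ∀ᶠ t in nhdsWithin 0 (Set.Ioi 0),
        2 * I (crv t) * (1 / ρ (crv t)^2 + K) < C⁻¹ + ε/2 :=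
      hψ.eventually_lt_const (lt_of_le_of_lt hlim (by linarith))
    have hmap : Tendsto (fun δ : ℝ => δ/‖ustar‖) (nhdsWithin 0 (Set.Ioi 0))
        (nhdsWithin 0 (Set.Ioi 0)) := by
      apply tendsto_nhdsWithin_of_tendsto_nhds_of_eventually_within
      · have h1 : Tendsto (fun δ : ℝ => δ/‖ustar‖) (nhds 0) (nhds (0/‖ustar‖)) :=
          (continuous_id.div_const _).tendsto 0
        rw [zero_div] at h1
        exact h1.mono_left nhdsWithin_le_nhds
      · filter_upwards [self_mem_nhdsWithin] with δ hδ
        exact div_pos hδ hns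
    have hup : ∀ᶠ δ in nhdsWithin 0 (Set.Ioi 0),
        2 * I (crv (δ/‖ustar‖)) * (1 / ρ (crv (δ/‖ustar‖))^2 + K) < C⁻¹ + ε/2 :=
      hmap.eventually hup0
    filter_upwards [hup, Ioc_mem_nhdsGT_of_mem (Set.mem_Ico.mpr ⟨le_refl 0, hδ₁⟩),
      self_mem_nhdsWithin] with δ h1 h2 hδpos
    have hδpos' : (0:ℝ) < δ := hδpos
    obtain ⟨-, hδle⟩ := h2
    have htpos : 0 < δ/‖ustar‖ := div_pos hδpos' hns
    have hθn : ‖crv (δ/‖ustar‖) - θ0‖ = δ := by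
      rw [hctn, abs_of_pos htpos, div_mul_cancel₀ _ hns.ne']
    have hmemS : 2 * I (crv (δ/‖ustar‖)) * (1 / ρ (crv (δ/‖ustar‖))^2 + K)
        ∈ {v : ℝ | ∃ θ : EuclideanSpace ℝ (Fin p),
          0 < ‖θ - θ0‖ ∧ ‖θ - θ0‖ ≤ δ ∧ v = 2 * I θ * (1 / ρ θ ^ 2 + K)} :=
      ⟨crv (δ/‖ustar‖), by rw [hθn]; exact hδpos', by rw [hθn], rfl⟩
    have hbddS : ∀ v ∈ {v : ℝ | ∃ θ : EuclideanSpace ℝ (Fin p),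
        0 < ‖θ - θ0‖ ∧ ‖θ - θ0‖ ≤ δ ∧ v = 2 * I θ * (1 / ρ θ ^ 2 + K)},
        C⁻¹ - min (ε/2) (C⁻¹/2) ≤ v := by
      rintro v ⟨θ, hv1, hv2, rfl⟩
      exact hlow θ hv1 (le_trans hv2 hδle)
    have hge : C⁻¹ - min (ε/2) (C⁻¹/2) ≤ sInf {v : ℝ | ∃ θ : EuclideanSpace ℝ (Fin p),
        0 < ‖θ - θ0‖ ∧ ‖θ - θ0‖ ≤ δ ∧ v = 2 * I θ * (1 / ρ θ ^ 2 + K)} :=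
      le_csInf ⟨_, hmemS⟩ hbddS
    have hle : sInf {v : ℝ | ∃ θ : EuclideanSpace ℝ (Fin p),
        0 < ‖θ - θ0‖ ∧ ‖θ - θ0‖ ≤ δ ∧ v = 2 * I θ * (1 / ρ θ ^ 2 + K)}
        ≤ 2 * I (crv (δ/‖ustar‖)) * (1 / ρ (crv (δ/‖ustar‖))^2 + K) :=
      csInf_le ⟨_, fun v hv => hbddS v hv⟩ hmemS
    rw [Real.dist_eq, abs_lt]
    have hm : min (ε/2) (C⁻¹/2) ≤ ε/2 := min_le_left _ _
    constructor
    · linarith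
    · linarith
end
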